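/- Let I be an instance of SPA-ST that admits a super-stable matching. Then for any two weakly stable matchings M1 and M2 in I, any lecturer l_k that is undersubscribed in M1, and any project p offered by l_k, the number of students assigned to p in M1 equals the number of students assigned to p in M2. -/

import Mathlib

open scoped Classical

/-- An instance of the Student-Project Allocation problem with lecturer
preferences over students, with Ties (SPA-ST).  `sPref s p q` means student `s`
ranks project `p` at least as highly as project `q` (`p ⪰_s q`); `lPref k t t'`
means lecturer `k` ranks student `t` at least as highly as student `t'`. -/
structure SPAST (S P L : Type) [Fintype S] [Fintype P] [Fintype L]
    [DecidableEq S] [DecidableEq P] [DecidableEq L] where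
  /-- the lecturer offering each project -/
  lec : P → L
  /-- project capacities -/
  c : P → ℕ
  /-- lecturer capacities -/
  d : L → ℕ
  cpos : ∀ p : P, 0 < c p
  dpos : ∀ k : L, 0 < d k
  /-- the set of projects acceptable to each student -/
  acc : S → Finset P
  sPref : S → P → P → Prop
  lPref : L → S → S → Prop
  sRefl : ∀ s : S, ∀ p ∈ acc s, sPref s p p
  sTrans : ∀ s : S, ∀ p ∈ acc s, ∀ q ∈ acc s, ∀ r ∈ acc s,
    sPref s p q → sPref s q r → sPref s p r
  sTotal : ∀ s : S, ∀ p ∈ acc s, ∀ q ∈ acc s, sPref s p q ∨ sPref s q p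
  lRefl : ∀ k : L, ∀ t : S, (∃ p ∈ acc t, lec p = k) → lPref k t t
  lTrans : ∀ k : L, ∀ t1 t2 t3 : S,
    (∃ p ∈ acc t1, lec p = k) → (∃ p ∈ acc t2, lec p = k) → (∃ p ∈ acc t3, lec p = k) →
    lPref k t1 t2 → lPref k t2 t3 → lPref k t1 t3
  lTotal : ∀ k : L, ∀ t1 t2 : S,
    (∃ p ∈ acc t1, lec p = k) → (∃ p ∈ acc t2, lec p = k) →
    lPref k t1 t2 ∨ lPref k t2 t1
  capLB : ∀ p : P, c p ≤ d (lec p)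
  capUB : ∀ k : L, d k ≤ ∑ p ∈ Finset.univ.filter (fun p => lec p = k), c p

namespace SPAST

variable {S P L : Type} [Fintype S] [Fintype P] [Fintype L]
  [DecidableEq S] [DecidableEq P] [DecidableEq L]

/-- `M` is a matching: pairs are acceptable, each student is matched at most once,
and project and lecturer capacities are respected. -/
def IsMatching (I : SPAST S P L) (M : Finset (S × P)) : Prop :=
  (∀ x ∈ M, x.2 ∈ I.acc x.1) ∧
  (∀ s : S, ∀ p q : P, (s, p) ∈ M → (s, q) ∈ M → p = q) ∧
  (∀ p : P, (M.filter (fun x => x.2 = p)).card ≤ I.c p) ∧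
  (∀ k : L, (M.filter (fun x => I.lec x.2 = k)).card ≤ I.d k)

/-- The set `M(p)` of students assigned to project `p` in `M`. -/
def projAsg (M : Finset (S × P)) (p : P) : Finset S :=
  (M.filter (fun x => x.2 = p)).image Prod.fst

/-- The set `M(l_k)` of students assigned to lecturer `k` in `M`. -/
def lecAsg (I : SPAST S P L) (M : Finset (S × P)) (k : L) : Finset S :=
  (M.filter (fun x => I.lec x.2 = k)).image Prod.fst

/-- `t` is a least-preferred (worst) student of lecturer `k` in the set `T`. -/
def WorstIn (I : SPAST S P L) (k : L) (T : Finset S) (t : S) : Prop :=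
  t ∈ T ∧ ∀ t' ∈ T, I.lPref k t' t

/-- `(s, p)` is a super-blocking pair for `M`. -/
def SuperBlocking (I : SPAST S P L) (M : Finset (S × P)) (s : S) (p : P) : Prop :=
  p ∈ I.acc s ∧ (s, p) ∉ M ∧
  (∀ q : P, (s, q) ∈ M → ¬(I.sPref s q p ∧ ¬I.sPref s p q)) ∧
  (((projAsg M p).card < I.c p ∧ (lecAsg I M (I.lec p)).card < I.d (I.lec p)) ∨
   ((projAsg M p).card < I.c p ∧ (lecAsg I M (I.lec p)).card = I.d (I.lec p) ∧
     (s ∈ lecAsg I M (I.lec p) ∨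
      ∃ t : S, WorstIn I (I.lec p) (lecAsg I M (I.lec p)) t ∧ I.lPref (I.lec p) s t)) ∨
   ((projAsg M p).card = I.c p ∧
     ∃ t : S, WorstIn I (I.lec p) (projAsg M p) t ∧ I.lPref (I.lec p) s t))

/-- `(s, p)` is a weakly-blocking pair for `M`. -/
def WeakBlocking (I : SPAST S P L) (M : Finset (S × P)) (s : S) (p : P) : Prop :=
  p ∈ I.acc s ∧ (s, p) ∉ M ∧
  (∀ q : P, (s, q) ∈ M → I.sPref s p q ∧ ¬I.sPref s q p) ∧
  (((projAsg M p).card < I.c p ∧ (lecAsg I M (I.lec p)).card < I.d (I.lec p)) ∨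
   ((projAsg M p).card < I.c p ∧ (lecAsg I M (I.lec p)).card = I.d (I.lec p) ∧
     (s ∈ lecAsg I M (I.lec p) ∨
      ∃ t : S, WorstIn I (I.lec p) (lecAsg I M (I.lec p)) t ∧
        (I.lPref (I.lec p) s t ∧ ¬I.lPref (I.lec p) t s))) ∨
   ((projAsg M p).card = I.c p ∧
     ∃ t : S, WorstIn I (I.lec p) (projAsg M p) t ∧
       (I.lPref (I.lec p) s t ∧ ¬I.lPref (I.lec p) t s)))

/-- `M` is a super-stable matching in `I`. -/
def SuperStable (I : SPAST S P L) (M : Finset (S × P)) : Prop :=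
  I.IsMatching M ∧ ∀ (s : S) (p : P), ¬SuperBlocking I M s p

/-- `M` is a weakly stable matching in `I`. -/
def WeaklyStable (I : SPAST S P L) (M : Finset (S × P)) : Prop :=
  I.IsMatching M ∧ ∀ (s : S) (p : P), ¬WeakBlocking I M s p

/-- `I` is an SPA-S instance: all preference lists are strictly ordered
(the preorders are antisymmetric). -/
def StrictPrefs (I : SPAST S P L) : Prop :=
  (∀ s : S, ∀ p ∈ I.acc s, ∀ q ∈ I.acc s, I.sPref s p q → I.sPref s q p → p = q) ∧
  (∀ k : L, ∀ t t' : S, (∃ p ∈ I.acc t, I.lec p = k) → (∃ p ∈ I.acc t', I.lec p = k) →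
    I.lPref k t t' → I.lPref k t' t → t = t')

/-- `I'` is an SPA-S instance obtained from `I` by breaking the ties. -/
def TieBreaking (I I' : SPAST S P L) : Prop :=
  I'.lec = I.lec ∧ I'.c = I.c ∧ I'.d = I.d ∧ I'.acc = I.acc ∧
  StrictPrefs I' ∧
  (∀ (s : S) (p q : P), I.sPref s p q → ¬I.sPref s q p →
    I'.sPref s p q ∧ ¬I'.sPref s q p) ∧
  (∀ (k : L) (t t' : S), I.lPref k t t' → ¬I.lPref k t' t →
    I'.lPref k t t' ∧ ¬I'.lPref k t' t)

end SPAST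

namespace SPAST

section RuralHospitals
set_option linter.unusedSectionVars false

variable {S P L : Type} [Fintype S] [Fintype P] [Fintype L]
  [DecidableEq S] [DecidableEq P] [DecidableEq L]

/-! ### Basic membership and cardinality lemmas -/

theorem mem_projAsg {M : Finset (S × P)} {s : S} {p : P} :
    s ∈ projAsg M p ↔ (s, p) ∈ M := by
  constructor
  · intro h
    obtain ⟨e, he, hfst⟩ := Finset.mem_image.mp h
    obtain ⟨heM, he2⟩ := Finset.mem_filter.mp he
    have : e = (s, p) := by
      cases e with
      | mk a b =>
        simp only at he2 hfst
        simp [he2, hfst]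
    rwa [this] at heM
  · intro h
    exact Finset.mem_image.mpr ⟨(s, p), Finset.mem_filter.mpr ⟨h, rfl⟩, rfl⟩

theorem mem_lecAsg {I : SPAST S P L} {M : Finset (S × P)} {s : S} {k : L} :
    s ∈ lecAsg I M k ↔ ∃ q, (s, q) ∈ M ∧ I.lec q = k := by
  constructor
  · intro h
    obtain ⟨e, he, hfst⟩ := Finset.mem_image.mp h
    obtain ⟨heM, he2⟩ := Finset.mem_filter.mp he
    cases e with
    | mk a b =>
      simp only at he2 hfst
      subst hfst
      exact ⟨b, heM, he2⟩
  · rintro ⟨q, hq, hlec⟩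
    exact Finset.mem_image.mpr ⟨(s, q), Finset.mem_filter.mpr ⟨hq, hlec⟩, rfl⟩

theorem card_projAsg (M : Finset (S × P)) (p : P) :
    (projAsg M p).card = (M.filter (fun x => x.2 = p)).card := by
  apply Finset.card_image_of_injOn
  rintro ⟨a, b⟩ ha ⟨a', b'⟩ ha' h
  have hb : b = p := (Finset.mem_filter.mp ha).2
  have hb' : b' = p := (Finset.mem_filter.mp ha').2
  simp only at h
  simp [h, hb, hb']

theorem card_lecAsg {I : SPAST S P L} {M : Finset (S × P)}
    (hMf : ∀ s : S, ∀ p q : P, (s, p) ∈ M → (s, q) ∈ M → p = q) (k : L) :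
    (lecAsg I M k).card = (M.filter (fun x => I.lec x.2 = k)).card := by
  apply Finset.card_image_of_injOn
  rintro ⟨a, b⟩ ha ⟨a', b'⟩ ha' h
  simp only at h
  subst h
  have := hMf a b b' (Finset.mem_filter.mp ha).1 (Finset.mem_filter.mp ha').1
  simp [this]

theorem card_projAsg_le {I : SPAST S P L} {M : Finset (S × P)}
    (hMm : I.IsMatching M) (p : P) : (projAsg M p).card ≤ I.c p := by
  rw [card_projAsg]; exact hMm.2.2.1 p

theorem card_lecAsg_le {I : SPAST S P L} {M : Finset (S × P)}
    (hMm : I.IsMatching M) (k : L) : (lecAsg I M k).card ≤ I.d k := by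
  rw [card_lecAsg hMm.2.1]; exact hMm.2.2.2 k

/-! ### Worst elements exist -/

theorem exists_worst (I : SPAST S P L) (k : L) :
    ∀ T : Finset S, T.Nonempty → (∀ t ∈ T, ∃ p ∈ I.acc t, I.lec p = k) →
      ∃ t, I.WorstIn k T t := by
  intro T
  induction T using Finset.induction_on with
  | empty => intro h; simp at h
  | @insert a T' ha ih =>
    intro _ hacc
    have haccA := hacc a (Finset.mem_insert_self a T')
    rcases T'.eq_empty_or_nonempty with rfl | hne
    · refine ⟨a, Finset.mem_insert_self a _, ?_⟩
      intro t' ht'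
      have : t' = a := by simpa using ht'
      subst this
      exact I.lRefl k t' haccA
    · obtain ⟨t₀, ht₀T, ht₀min⟩ := ih hne (fun t ht => hacc t (Finset.mem_insert_of_mem ht))
      have hacct₀ := hacc t₀ (Finset.mem_insert_of_mem ht₀T)
      rcases I.lTotal k a t₀ haccA hacct₀ with h | h
      · refine ⟨t₀, Finset.mem_insert_of_mem ht₀T, ?_⟩
        intro t' ht'
        rcases Finset.mem_insert.mp ht' with rfl | ht'
        · exact h
        · exact ht₀min t' ht'
      · refine ⟨a, Finset.mem_insert_self a _, ?_⟩
        intro t' ht'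
        rcases Finset.mem_insert.mp ht' with rfl | ht'
        · exact I.lRefl k t' haccA
        · exact I.lTrans k t' t₀ a (hacc t' (Finset.mem_insert_of_mem ht')) hacct₀ haccA
            (ht₀min t' ht') h

/-! ### The two types of "moved" students -/

/-- Students matched in `W` to a project not their `M`-project, who do not strictly
prefer their `M`-assignment: they form super-blocking candidates against `M`. -/
noncomputable def TI (I : SPAST S P L) (M W : Finset (S × P)) : Finset S :=
  Finset.univ.filter (fun x => ∃ p, (x, p) ∈ W ∧ (x, p) ∉ M ∧
    ∀ q, (x, q) ∈ M → ¬(I.sPref x q p ∧ ¬ I.sPref x p q))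

/-- Students matched in `M` to a project not their `W`-project, who strictly prefer
their `M`-assignment (or are unmatched in `W`): weak-blocking candidates against `W`. -/
noncomputable def TII (I : SPAST S P L) (M W : Finset (S × P)) : Finset S :=
  Finset.univ.filter (fun x => ∃ q, (x, q) ∈ M ∧ (x, q) ∉ W ∧
    ∀ p, (x, p) ∈ W → (I.sPref x q p ∧ ¬ I.sPref x p q))

variable {I : SPAST S P L} {M W : Finset (S × P)}

theorem tI_spec (hWf : ∀ s : S, ∀ p q : P, (s, p) ∈ W → (s, q) ∈ W → p = q)
    {x : S} {p : P} (hx : x ∈ TI I M W) (hxp : (x, p) ∈ W) :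
    (x, p) ∉ M ∧ ∀ q, (x, q) ∈ M → ¬(I.sPref x q p ∧ ¬ I.sPref x p q) := by
  obtain ⟨-, p', hp', h1, h2⟩ := Finset.mem_filter.mp hx
  obtain rfl : p' = p := hWf x p' p hp' hxp
  exact ⟨h1, h2⟩

theorem tII_spec (hMf : ∀ s : S, ∀ p q : P, (s, p) ∈ M → (s, q) ∈ M → p = q)
    {y : S} {q : P} (hy : y ∈ TII I M W) (hyq : (y, q) ∈ M) :
    (y, q) ∉ W ∧ ∀ p, (y, p) ∈ W → (I.sPref y q p ∧ ¬ I.sPref y p q) := by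
  obtain ⟨-, q', hq', h1, h2⟩ := Finset.mem_filter.mp hy
  obtain rfl : q' = q := hMf y q' q hq' hyq
  exact ⟨h1, h2⟩

theorem TI_disj_TII {x : S} (h1 : x ∈ TI I M W) (h2 : x ∈ TII I M W) : False := by
  obtain ⟨-, p, hp, hpM, hall⟩ := Finset.mem_filter.mp h1
  obtain ⟨-, q, hq, hqW, hall2⟩ := Finset.mem_filter.mp h2
  exact hall q hq (hall2 p hp)

theorem classifyW (hMm : I.IsMatching M) (hWm : I.IsMatching W) {x : S} {p : P}
    (hxp : (x, p) ∈ W) (hxpM : (x, p) ∉ M) : x ∈ TI I M W ∨ x ∈ TII I M W := by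
  by_cases h : ∃ q, (x, q) ∈ M ∧ (I.sPref x q p ∧ ¬ I.sPref x p q)
  · obtain ⟨q, hq, hstr⟩ := h
    right
    refine Finset.mem_filter.mpr ⟨Finset.mem_univ x, q, hq, ?_, ?_⟩
    · intro hqW
      exact hxpM (by rwa [hWm.2.1 x q p hqW hxp] at hq)
    · intro p' hp'
      rw [hWm.2.1 x p' p hp' hxp]
      exact hstr
  · left
    push_neg at h
    refine Finset.mem_filter.mpr ⟨Finset.mem_univ x, p, hxp, hxpM, ?_⟩
    intro q hq hc
    exact hc.2 (h q hq hc.1)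

theorem classifyM (hMm : I.IsMatching M) (hWm : I.IsMatching W) {y : S} {q : P}
    (hyq : (y, q) ∈ M) (hyW : (y, q) ∉ W) : y ∈ TI I M W ∨ y ∈ TII I M W := by
  by_cases hw : ∃ p, (y, p) ∈ W
  · obtain ⟨p, hp⟩ := hw
    by_cases hstr : I.sPref y q p ∧ ¬ I.sPref y p q
    · right
      refine Finset.mem_filter.mpr ⟨Finset.mem_univ y, q, hyq, hyW, ?_⟩
      intro p' hp'
      rw [hWm.2.1 y p' p hp' hp]
      exact hstr
    · left
      refine Finset.mem_filter.mpr ⟨Finset.mem_univ y, p, hp, ?_, ?_⟩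
      · intro hpM
        exact hyW (by rwa [hMm.2.1 y p q hpM hyq] at hp)
      · intro q' hq'
        rw [hMm.2.1 y q' q hq' hyq]
        exact hstr
  · right
    exact Finset.mem_filter.mpr ⟨Finset.mem_univ y, q, hyq, hyW,
      fun p hp => absurd ⟨p, hp⟩ hw⟩

/-! ### Facts from stability -/

theorem super_proj (hM : SuperStable I M) (hWm : I.IsMatching W) {x : S} {p : P}
    (hx : x ∈ TI I M W) (hxp : (x, p) ∈ W)
    (hfull : (projAsg M p).card = I.c p) :
    ∀ y ∈ projAsg M p, I.lPref (I.lec p) y x ∧ ¬ I.lPref (I.lec p) x y := by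
  obtain ⟨hxpM, hpref⟩ := tI_spec hWm.2.1 hx hxp
  have hacc : p ∈ I.acc x := hWm.1 (x, p) hxp
  have hnb := hM.2 x p
  have hne : (projAsg M p).Nonempty := by
    rw [← Finset.card_pos, hfull]; exact I.cpos p
  have haccT : ∀ t ∈ projAsg M p, ∃ r ∈ I.acc t, I.lec r = I.lec p := by
    intro t ht
    exact ⟨p, hM.1.1 (t, p) (mem_projAsg.mp ht), rfl⟩
  obtain ⟨t₀, ht₀⟩ := exists_worst I (I.lec p) _ hne haccT
  have hxt₀ : ¬ I.lPref (I.lec p) x t₀ := by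
    intro hcon
    exact hnb ⟨hacc, hxpM, hpref, Or.inr (Or.inr ⟨hfull, t₀, ht₀, hcon⟩)⟩
  have hxw : ∃ r ∈ I.acc x, I.lec r = I.lec p := ⟨p, hacc, rfl⟩
  have ht₀x : I.lPref (I.lec p) t₀ x := by
    rcases I.lTotal (I.lec p) x t₀ hxw (haccT t₀ ht₀.1) with h | h
    · exact absurd h hxt₀
    · exact h
  intro y hy
  refine ⟨I.lTrans _ y t₀ x (haccT y hy) (haccT t₀ ht₀.1) hxw (ht₀.2 y hy) ht₀x, ?_⟩
  intro hcon
  exact hxt₀ (I.lTrans _ x y t₀ hxw (haccT y hy) (haccT t₀ ht₀.1) hcon (ht₀.2 y hy))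

theorem super_lec (hM : SuperStable I M) (hWm : I.IsMatching W) {x : S} {p : P}
    (hx : x ∈ TI I M W) (hxp : (x, p) ∈ W)
    (hund : (projAsg M p).card < I.c p) :
    (lecAsg I M (I.lec p)).card = I.d (I.lec p) ∧
      ∀ y ∈ lecAsg I M (I.lec p), I.lPref (I.lec p) y x ∧ ¬ I.lPref (I.lec p) x y := by
  obtain ⟨hxpM, hpref⟩ := tI_spec hWm.2.1 hx hxp
  have hacc : p ∈ I.acc x := hWm.1 (x, p) hxp
  have hnb := hM.2 x p
  have hlfull : (lecAsg I M (I.lec p)).card = I.d (I.lec p) := by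
    rcases (card_lecAsg_le hM.1 (I.lec p)).lt_or_eq with hlt | h
    · exact absurd (hnb ⟨hacc, hxpM, hpref, Or.inl ⟨hund, hlt⟩⟩) (fun f => f)
    · exact h
  refine ⟨hlfull, ?_⟩
  have hne : (lecAsg I M (I.lec p)).Nonempty := by
    rw [← Finset.card_pos, hlfull]; exact I.dpos (I.lec p)
  have haccT : ∀ t ∈ lecAsg I M (I.lec p), ∃ r ∈ I.acc t, I.lec r = I.lec p := by
    intro t ht
    obtain ⟨r, hr, hk⟩ := mem_lecAsg.mp ht
    exact ⟨r, hM.1.1 (t, r) hr, hk⟩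
  obtain ⟨t₀, ht₀⟩ := exists_worst I (I.lec p) _ hne haccT
  have hxt₀ : ¬ I.lPref (I.lec p) x t₀ := by
    intro hcon
    exact hnb ⟨hacc, hxpM, hpref,
      Or.inr (Or.inl ⟨hund, hlfull, Or.inr ⟨t₀, ht₀, hcon⟩⟩)⟩
  have hxw : ∃ r ∈ I.acc x, I.lec r = I.lec p := ⟨p, hacc, rfl⟩
  have ht₀x : I.lPref (I.lec p) t₀ x := by
    rcases I.lTotal (I.lec p) x t₀ hxw (haccT t₀ ht₀.1) with h | h
    · exact absurd h hxt₀
    · exact h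
  intro y hy
  refine ⟨I.lTrans _ y t₀ x (haccT y hy) (haccT t₀ ht₀.1) hxw (ht₀.2 y hy) ht₀x, ?_⟩
  intro hcon
  exact hxt₀ (I.lTrans _ x y t₀ hxw (haccT y hy) (haccT t₀ ht₀.1) hcon (ht₀.2 y hy))

theorem weak_proj (hW : WeaklyStable I W) (hMm : I.IsMatching M) {y : S} {q : P}
    (hy : y ∈ TII I M W) (hyq : (y, q) ∈ M)
    (hfull : (projAsg W q).card = I.c q) :
    ∀ z ∈ projAsg W q, I.lPref (I.lec q) z y := by
  obtain ⟨hyqW, hpref⟩ := tII_spec hMm.2.1 hy hyq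
  have hacc : q ∈ I.acc y := hMm.1 (y, q) hyq
  have hnb := hW.2 y q
  have hne : (projAsg W q).Nonempty := by
    rw [← Finset.card_pos, hfull]; exact I.cpos q
  have haccT : ∀ t ∈ projAsg W q, ∃ r ∈ I.acc t, I.lec r = I.lec q := by
    intro t ht
    exact ⟨q, hW.1.1 (t, q) (mem_projAsg.mp ht), rfl⟩
  obtain ⟨t₀, ht₀⟩ := exists_worst I (I.lec q) _ hne haccT
  have hyw : ∃ r ∈ I.acc y, I.lec r = I.lec q := ⟨q, hacc, rfl⟩
  have ht₀y : I.lPref (I.lec q) t₀ y := by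
    by_cases hyt : I.lPref (I.lec q) y t₀
    · by_contra hcon
      exact hnb ⟨hacc, hyqW, hpref, Or.inr (Or.inr ⟨hfull, t₀, ht₀, hyt, hcon⟩)⟩
    · rcases I.lTotal (I.lec q) y t₀ hyw (haccT t₀ ht₀.1) with h | h
      · exact absurd h hyt
      · exact h
  intro z hz
  exact I.lTrans _ z t₀ y (haccT z hz) (haccT t₀ ht₀.1) hyw (ht₀.2 z hz) ht₀y

theorem weak_lec (hW : WeaklyStable I W) (hMm : I.IsMatching M) {y : S} {q : P}
    (hy : y ∈ TII I M W) (hyq : (y, q) ∈ M)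
    (hund : (projAsg W q).card < I.c q) :
    (lecAsg I W (I.lec q)).card = I.d (I.lec q) ∧
      ∀ z ∈ lecAsg I W (I.lec q), I.lPref (I.lec q) z y := by
  obtain ⟨hyqW, hpref⟩ := tII_spec hMm.2.1 hy hyq
  have hacc : q ∈ I.acc y := hMm.1 (y, q) hyq
  have hnb := hW.2 y q
  have hlfull : (lecAsg I W (I.lec q)).card = I.d (I.lec q) := by
    rcases (card_lecAsg_le hW.1 (I.lec q)).lt_or_eq with hlt | h
    · exact absurd (hnb ⟨hacc, hyqW, hpref, Or.inl ⟨hund, hlt⟩⟩) (fun f => f)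
    · exact h
  refine ⟨hlfull, ?_⟩
  have hne : (lecAsg I W (I.lec q)).Nonempty := by
    rw [← Finset.card_pos, hlfull]; exact I.dpos (I.lec q)
  have haccT : ∀ t ∈ lecAsg I W (I.lec q), ∃ r ∈ I.acc t, I.lec r = I.lec q := by
    intro t ht
    obtain ⟨r, hr, hk⟩ := mem_lecAsg.mp ht
    exact ⟨r, hW.1.1 (t, r) hr, hk⟩
  obtain ⟨t₀, ht₀⟩ := exists_worst I (I.lec q) _ hne haccT
  have hyw : ∃ r ∈ I.acc y, I.lec r = I.lec q := ⟨q, hacc, rfl⟩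
  have ht₀y : I.lPref (I.lec q) t₀ y := by
    by_cases hyt : I.lPref (I.lec q) y t₀
    · by_contra hcon
      exact hnb ⟨hacc, hyqW, hpref,
        Or.inr (Or.inl ⟨hund, hlfull, Or.inr ⟨t₀, ht₀, hyt, hcon⟩⟩)⟩
    · rcases I.lTotal (I.lec q) y t₀ hyw (haccT t₀ ht₀.1) with h | h
      · exact absurd h hyt
      · exact h
  intro z hz
  exact I.lTrans _ z t₀ y (haccT z hz) (haccT t₀ ht₀.1) hyw (ht₀.2 z hz) ht₀y

end RuralHospitals

end SPAST

namespace SPAST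

section RuralHospitals2
set_option linter.unusedSectionVars false
set_option linter.unusedVariables false

variable {S P L : Type} [Fintype S] [Fintype P] [Fintype L]
  [DecidableEq S] [DecidableEq P] [DecidableEq L]

/-- Students assigned in `X` to a project in the zone `Q`. -/
def asg (X : Finset (S × P)) (Q : Finset P) : Finset S :=
  (X.filter (fun e => e.2 ∈ Q)).image Prod.fst

theorem mem_asg {X : Finset (S × P)} {Q : Finset P} {s : S} :
    s ∈ asg X Q ↔ ∃ q ∈ Q, (s, q) ∈ X := by
  constructor
  · intro h
    obtain ⟨e, he, hfst⟩ := Finset.mem_image.mp h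
    obtain ⟨heX, he2⟩ := Finset.mem_filter.mp he
    cases e with
    | mk a b =>
      simp only at he2 hfst
      subst hfst
      exact ⟨b, he2, heX⟩
  · rintro ⟨q, hq, hsq⟩
    exact Finset.mem_image.mpr ⟨(s, q), Finset.mem_filter.mpr ⟨hsq, hq⟩, rfl⟩

theorem asg_singleton (X : Finset (S × P)) (q : P) : asg X {q} = projAsg X q := by
  ext s
  simp only [mem_asg, mem_projAsg, Finset.mem_singleton]
  constructor
  · rintro ⟨q', rfl, h⟩; exact h
  · intro h; exact ⟨q, rfl, h⟩

theorem asg_lec (I : SPAST S P L) (X : Finset (S × P)) (k : L) :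
    asg X (Finset.univ.filter (fun q => I.lec q = k)) = lecAsg I X k := by
  ext s
  simp only [mem_asg, mem_lecAsg, Finset.mem_filter, Finset.mem_univ, true_and]
  constructor
  · rintro ⟨q, hlec, h⟩; exact ⟨q, h, hlec⟩
  · rintro ⟨q, h, hlec⟩; exact ⟨q, hlec, h⟩

variable {I : SPAST S P L} {M W : Finset (S × P)}

theorem inter_asg_sum {X : Finset (S × P)}
    (hXf : ∀ s : S, ∀ p q : P, (s, p) ∈ X → (s, q) ∈ X → p = q)
    (T : Finset S) (Q : Finset P) :
    (T ∩ asg X Q).card = ∑ q ∈ Q, (T ∩ projAsg X q).card := by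
  have hU : T ∩ asg X Q = Q.biUnion (fun q => T ∩ projAsg X q) := by
    ext s
    simp only [Finset.mem_inter, Finset.mem_biUnion, mem_asg, mem_projAsg]
    constructor
    · rintro ⟨hT, q, hq, hsq⟩; exact ⟨q, hq, hT, hsq⟩
    · rintro ⟨q, hq, hT, hsq⟩; exact ⟨hT, q, hq, hsq⟩
  rw [hU]
  apply Finset.card_biUnion
  intro q hq q' hq' hne
  rw [Function.onFun, Finset.disjoint_left]
  intro s hs hs'
  exact hne (hXf s q q' (mem_projAsg.mp (Finset.mem_inter.mp hs).2)
    (mem_projAsg.mp (Finset.mem_inter.mp hs').2))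

theorem inter_lec_sum {X : Finset (S × P)}
    (hXf : ∀ s : S, ∀ p q : P, (s, p) ∈ X → (s, q) ∈ X → p = q)
    (T : Finset S) (k : L) :
    (T ∩ lecAsg I X k).card
      = ∑ q ∈ Finset.univ.filter (fun q => I.lec q = k), (T ∩ projAsg X q).card := by
  rw [← asg_lec I X k, inter_asg_sum hXf]

/-! ### Partition of assignees into fixed, TI and TII parts -/

theorem partW (hMm : I.IsMatching M) (hWm : I.IsMatching W) (Q : Finset P) :
    (asg W Q).card = (asg (M ∩ W) Q).card
      + (TI I M W ∩ asg W Q).card + (TII I M W ∩ asg W Q).card := by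
  have hdisj1 : Disjoint (asg (M ∩ W) Q) (TI I M W ∩ asg W Q) := by
    rw [Finset.disjoint_left]
    intro s hs hs'
    obtain ⟨q, hqQ, hsq⟩ := mem_asg.mp hs
    exact (tI_spec hWm.2.1 (Finset.mem_inter.mp hs').1
      (Finset.mem_inter.mp hsq).2).1 (Finset.mem_inter.mp hsq).1
  have hdisj2 : Disjoint (asg (M ∩ W) Q) (TII I M W ∩ asg W Q) := by
    rw [Finset.disjoint_left]
    intro s hs hs'
    obtain ⟨q, hqQ, hsq⟩ := mem_asg.mp hs
    have h := tII_spec hMm.2.1 (Finset.mem_inter.mp hs').1 (Finset.mem_inter.mp hsq).1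
    exact h.1 (Finset.mem_inter.mp hsq).2
  have hdisj3 : Disjoint (TI I M W ∩ asg W Q) (TII I M W ∩ asg W Q) := by
    rw [Finset.disjoint_left]
    intro s hs hs'
    exact TI_disj_TII (Finset.mem_inter.mp hs).1 (Finset.mem_inter.mp hs').1
  have hunion : asg W Q
      = asg (M ∩ W) Q ∪ (TI I M W ∩ asg W Q) ∪ (TII I M W ∩ asg W Q) := by
    ext s
    simp only [Finset.mem_union]
    constructor
    · intro hs
      obtain ⟨q, hqQ, hsq⟩ := mem_asg.mp hs
      by_cases hM' : (s, q) ∈ M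
      · exact Or.inl (Or.inl (mem_asg.mpr ⟨q, hqQ, Finset.mem_inter.mpr ⟨hM', hsq⟩⟩))
      · rcases classifyW hMm hWm hsq hM' with h | h
        · exact Or.inl (Or.inr (Finset.mem_inter.mpr ⟨h, hs⟩))
        · exact Or.inr (Finset.mem_inter.mpr ⟨h, hs⟩)
    · rintro ((h | h) | h)
      · obtain ⟨q, hqQ, hsq⟩ := mem_asg.mp h
        exact mem_asg.mpr ⟨q, hqQ, (Finset.mem_inter.mp hsq).2⟩
      · exact (Finset.mem_inter.mp h).2
      · exact (Finset.mem_inter.mp h).2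
  have hcard := congrArg Finset.card hunion
  rw [Finset.card_union_of_disjoint (Finset.disjoint_union_left.mpr ⟨hdisj2, hdisj3⟩),
    Finset.card_union_of_disjoint hdisj1] at hcard
  exact hcard

theorem partM (hMm : I.IsMatching M) (hWm : I.IsMatching W) (Q : Finset P) :
    (asg M Q).card = (asg (M ∩ W) Q).card
      + (TI I M W ∩ asg M Q).card + (TII I M W ∩ asg M Q).card := by
  have hdisj1 : Disjoint (asg (M ∩ W) Q) (TI I M W ∩ asg M Q) := by
    rw [Finset.disjoint_left]
    intro s hs hs'
    obtain ⟨q, hqQ, hsq⟩ := mem_asg.mp hs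
    exact (tI_spec hWm.2.1 (Finset.mem_inter.mp hs').1
      (Finset.mem_inter.mp hsq).2).1 (Finset.mem_inter.mp hsq).1
  have hdisj2 : Disjoint (asg (M ∩ W) Q) (TII I M W ∩ asg M Q) := by
    rw [Finset.disjoint_left]
    intro s hs hs'
    obtain ⟨q, hqQ, hsq⟩ := mem_asg.mp hs
    have h := tII_spec hMm.2.1 (Finset.mem_inter.mp hs').1 (Finset.mem_inter.mp hsq).1
    exact h.1 (Finset.mem_inter.mp hsq).2
  have hdisj3 : Disjoint (TI I M W ∩ asg M Q) (TII I M W ∩ asg M Q) := by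
    rw [Finset.disjoint_left]
    intro s hs hs'
    exact TI_disj_TII (Finset.mem_inter.mp hs).1 (Finset.mem_inter.mp hs').1
  have hunion : asg M Q
      = asg (M ∩ W) Q ∪ (TI I M W ∩ asg M Q) ∪ (TII I M W ∩ asg M Q) := by
    ext s
    simp only [Finset.mem_union]
    constructor
    · intro hs
      obtain ⟨q, hqQ, hsq⟩ := mem_asg.mp hs
      by_cases hW' : (s, q) ∈ W
      · exact Or.inl (Or.inl (mem_asg.mpr ⟨q, hqQ, Finset.mem_inter.mpr ⟨hsq, hW'⟩⟩))
      · rcases classifyM hMm hWm hsq hW' with h | h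
        · exact Or.inl (Or.inr (Finset.mem_inter.mpr ⟨h, hs⟩))
        · exact Or.inr (Finset.mem_inter.mpr ⟨h, hs⟩)
    · rintro ((h | h) | h)
      · obtain ⟨q, hqQ, hsq⟩ := mem_asg.mp h
        exact mem_asg.mpr ⟨q, hqQ, (Finset.mem_inter.mp hsq).1⟩
      · exact (Finset.mem_inter.mp h).2
      · exact (Finset.mem_inter.mp h).2
  have hcard := congrArg Finset.card hunion
  rw [Finset.card_union_of_disjoint (Finset.disjoint_union_left.mpr ⟨hdisj2, hdisj3⟩),
    Finset.card_union_of_disjoint hdisj1] at hcard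
  exact hcard

end RuralHospitals2

end SPAST

namespace SPAST

section RuralHospitals3
set_option linter.unusedSectionVars false
set_option linter.unusedVariables false

variable {S P L : Type} [Fintype S] [Fintype P] [Fintype L]
  [DecidableEq S] [DecidableEq P] [DecidableEq L]

/-- There is a `TI`-student whose `W`-project is offered by `lam` and undersubscribed
in `M` (an "A1-configuration"). -/
def HasA1 (I : SPAST S P L) (M W : Finset (S × P)) (lam : L) : Prop :=
  ∃ x p, x ∈ TI I M W ∧ (x, p) ∈ W ∧ I.lec p = lam ∧ (projAsg M p).card < I.c p

/-- There is a `TII`-student whose `M`-project is offered by `lam` and undersubscribed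
in `W` (a "B1-configuration"). -/
def HasB1 (I : SPAST S P L) (M W : Finset (S × P)) (lam : L) : Prop :=
  ∃ y q, y ∈ TII I M W ∧ (y, q) ∈ M ∧ I.lec q = lam ∧ (projAsg W q).card < I.c q

variable {I : SPAST S P L} {M W : Finset (S × P)}

/-- A1- and B1-configurations cannot coexist at the same lecturer. -/
theorem A1_B1_clash (hM : SuperStable I M) (hW : WeaklyStable I W) {lam : L}
    (hA : HasA1 I M W lam) (hB : HasB1 I M W lam) : False := by
  obtain ⟨x, p, hx, hxp, hpl, hpu⟩ := hA
  obtain ⟨y, q, hy, hyq, hql, hqu⟩ := hB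
  have hsup := (super_lec hM hW.1 hx hxp hpu).2
  have hweak := (weak_lec hW hM.1 hy hyq hqu).2
  have hyM : y ∈ lecAsg I M (I.lec p) := mem_lecAsg.mpr ⟨q, hyq, by rw [hql, hpl]⟩
  have hxW : x ∈ lecAsg I W (I.lec q) := mem_lecAsg.mpr ⟨p, hxp, by rw [hpl, hql]⟩
  have h1 := hsup y hyM
  have h2 := hweak x hxW
  rw [hql] at h2
  rw [hpl] at h1
  exact h1.2 h2

/-- If `q` is full in `M` and some `TI`-student is `W`-assigned to `q`, then every
nonfixed `M`-assignee of `q` is in `TI`. -/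
theorem P1 (hM : SuperStable I M) (hW : WeaklyStable I W) {q : P}
    (hfM : (projAsg M q).card = I.c q) {x : S}
    (hx : x ∈ TI I M W) (hxq : (x, q) ∈ W) :
    ∀ y, (y, q) ∈ M → (y, q) ∉ W → y ∈ TI I M W := by
  intro y hyq hyW
  rcases classifyM hM.1 hW.1 hyq hyW with h | h
  · exact h
  · exfalso
    have h1 := super_proj hM hW.1 hx hxq hfM y (mem_projAsg.mpr hyq)
    rcases (card_projAsg_le hW.1 q).lt_or_eq with hlt | hfW
    · have hwk := (weak_lec hW hM.1 h hyq hlt).2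
      exact h1.2 (hwk x (mem_lecAsg.mpr ⟨q, hxq, rfl⟩))
    · have hwk := weak_proj hW hM.1 h hyq hfW
      exact h1.2 (hwk x (mem_projAsg.mpr hxq))

/-- If `q` is full in `W` and some `TII`-student is `M`-assigned to `q`, then every
nonfixed `W`-assignee of `q` is in `TII`. -/
theorem P2 (hM : SuperStable I M) (hW : WeaklyStable I W) {q : P}
    (hfW : (projAsg W q).card = I.c q) {y : S}
    (hy : y ∈ TII I M W) (hyq : (y, q) ∈ M) :
    ∀ z, (z, q) ∈ W → (z, q) ∉ M → z ∈ TII I M W := by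
  intro z hzq hzM
  rcases classifyW hM.1 hW.1 hzq hzM with h | h
  · exfalso
    have h2 := weak_proj hW hM.1 hy hyq hfW z (mem_projAsg.mpr hzq)
    rcases (card_projAsg_le hM.1 q).lt_or_eq with hlt | hfM
    · have hsup := (super_lec hM hW.1 h hzq hlt).2
      exact (hsup y (mem_lecAsg.mpr ⟨q, hyq, rfl⟩)).2 h2
    · have hsup := super_proj hM hW.1 h hzq hfM
      exact (hsup y (mem_projAsg.mpr hyq)).2 h2
  · exact h

theorem Lq1 (hM : SuperStable I M) (hW : WeaklyStable I W) {q : P}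
    (hfM : (projAsg M q).card = I.c q) :
    (TI I M W ∩ projAsg W q).card ≤ (TI I M W ∩ projAsg M q).card := by
  rcases (TI I M W ∩ projAsg W q).eq_empty_or_nonempty with he | ⟨x, hx⟩
  · simp [he]
  · have hxT := (Finset.mem_inter.mp hx).1
    have hxq := mem_projAsg.mp (Finset.mem_inter.mp hx).2
    have hTII : TII I M W ∩ projAsg M q = ∅ := by
      rw [Finset.eq_empty_iff_forall_notMem]
      intro y hy
      have hyT := (Finset.mem_inter.mp hy).1
      have hyq := mem_projAsg.mp (Finset.mem_inter.mp hy).2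
      have hyW : (y, q) ∉ W := (tII_spec hM.1.2.1 hyT hyq).1
      exact TI_disj_TII (P1 hM hW hfM hxT hxq y hyq hyW) hyT
    have pw := partW hM.1 hW.1 {q}
    have pm := partM hM.1 hW.1 {q}
    rw [asg_singleton, asg_singleton] at pw pm
    rw [hTII] at pm
    have hcap := card_projAsg_le hW.1 q
    simp only [Finset.card_empty] at pm
    omega

theorem Lq2 (hM : SuperStable I M) (hW : WeaklyStable I W) {q : P}
    (hfW : (projAsg W q).card = I.c q) :
    (TII I M W ∩ projAsg M q).card ≤ (TII I M W ∩ projAsg W q).card := by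
  rcases (TII I M W ∩ projAsg M q).eq_empty_or_nonempty with he | ⟨y, hy⟩
  · simp [he]
  · have hyT := (Finset.mem_inter.mp hy).1
    have hyq := mem_projAsg.mp (Finset.mem_inter.mp hy).2
    have hTI : TI I M W ∩ projAsg W q = ∅ := by
      rw [Finset.eq_empty_iff_forall_notMem]
      intro z hz
      have hzT := (Finset.mem_inter.mp hz).1
      have hzq := mem_projAsg.mp (Finset.mem_inter.mp hz).2
      have hzM : (z, q) ∉ M := (tI_spec hW.1.2.1 hzT hzq).1
      exact TI_disj_TII hzT (P2 hM hW hfW hyT hyq z hzq hzM)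
    have pw := partW hM.1 hW.1 {q}
    have pm := partM hM.1 hW.1 {q}
    rw [asg_singleton, asg_singleton] at pw pm
    rw [hTI] at pw
    have hcap := card_projAsg_le hM.1 q
    simp only [Finset.card_empty] at pw
    omega

theorem Llam1 (hM : SuperStable I M) (hW : WeaklyStable I W) (lam : L) :
    (TI I M W ∩ lecAsg I W lam).card ≤ (TI I M W ∩ lecAsg I M lam).card := by
  by_cases hA1 : HasA1 I M W lam
  · obtain ⟨x₀, p₀, hx₀, hx₀p, hlp₀, hu₀⟩ := hA1
    have hfull : (lecAsg I M lam).card = I.d lam := by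
      have := (super_lec hM hW.1 hx₀ hx₀p hu₀).1
      rwa [hlp₀] at this
    have hMII_le : (TII I M W ∩ lecAsg I M lam).card
        ≤ (TII I M W ∩ lecAsg I W lam).card := by
      rw [inter_lec_sum hM.1.2.1, inter_lec_sum hW.1.2.1]
      refine Finset.sum_le_sum ?_
      intro q hq
      rcases (TII I M W ∩ projAsg M q).eq_empty_or_nonempty with he | ⟨y, hy⟩
      · simp [he]
      · have hyq := mem_projAsg.mp (Finset.mem_inter.mp hy).2
        have hfq : (projAsg W q).card = I.c q := by
          rcases (card_projAsg_le hW.1 q).lt_or_eq with hlt | h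
          · exact (A1_B1_clash hM hW ⟨x₀, p₀, hx₀, hx₀p, hlp₀, hu₀⟩
              ⟨y, q, (Finset.mem_inter.mp hy).1, hyq, (Finset.mem_filter.mp hq).2, hlt⟩).elim
          · exact h
        exact Lq2 hM hW hfq
    have pw := partW hM.1 hW.1 (Finset.univ.filter (fun q => I.lec q = lam))
    have pm := partM hM.1 hW.1 (Finset.univ.filter (fun q => I.lec q = lam))
    rw [asg_lec, asg_lec] at pw pm
    have hcap := card_lecAsg_le hW.1 lam
    omega
  · rw [inter_lec_sum hW.1.2.1, inter_lec_sum hM.1.2.1]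
    refine Finset.sum_le_sum ?_
    intro q hq
    rcases (TI I M W ∩ projAsg W q).eq_empty_or_nonempty with he | ⟨x, hx⟩
    · simp [he]
    · have hxq := mem_projAsg.mp (Finset.mem_inter.mp hx).2
      have hfq : (projAsg M q).card = I.c q := by
        rcases (card_projAsg_le hM.1 q).lt_or_eq with hlt | h
        · exact absurd ⟨x, q, (Finset.mem_inter.mp hx).1, hxq,
            (Finset.mem_filter.mp hq).2, hlt⟩ hA1
        · exact h
      exact Lq1 hM hW hfq

theorem Llam2 (hM : SuperStable I M) (hW : WeaklyStable I W) (lam : L) :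
    (TII I M W ∩ lecAsg I M lam).card ≤ (TII I M W ∩ lecAsg I W lam).card := by
  by_cases hB1 : HasB1 I M W lam
  · obtain ⟨y₀, q₀, hy₀, hy₀q, hlq₀, hu₀⟩ := hB1
    have hfull : (lecAsg I W lam).card = I.d lam := by
      have := (weak_lec hW hM.1 hy₀ hy₀q hu₀).1
      rwa [hlq₀] at this
    have hWI_le : (TI I M W ∩ lecAsg I W lam).card
        ≤ (TI I M W ∩ lecAsg I M lam).card := by
      rw [inter_lec_sum hW.1.2.1, inter_lec_sum hM.1.2.1]
      refine Finset.sum_le_sum ?_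
      intro q hq
      rcases (TI I M W ∩ projAsg W q).eq_empty_or_nonempty with he | ⟨x, hx⟩
      · simp [he]
      · have hxq := mem_projAsg.mp (Finset.mem_inter.mp hx).2
        have hfq : (projAsg M q).card = I.c q := by
          rcases (card_projAsg_le hM.1 q).lt_or_eq with hlt | h
          · exact (A1_B1_clash hM hW
              ⟨x, q, (Finset.mem_inter.mp hx).1, hxq, (Finset.mem_filter.mp hq).2, hlt⟩
              ⟨y₀, q₀, hy₀, hy₀q, hlq₀, hu₀⟩).elim
          · exact h
        exact Lq1 hM hW hfq
    have pw := partW hM.1 hW.1 (Finset.univ.filter (fun q => I.lec q = lam))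
    have pm := partM hM.1 hW.1 (Finset.univ.filter (fun q => I.lec q = lam))
    rw [asg_lec, asg_lec] at pw pm
    have hcap := card_lecAsg_le hM.1 lam
    omega
  · rw [inter_lec_sum hM.1.2.1, inter_lec_sum hW.1.2.1]
    refine Finset.sum_le_sum ?_
    intro q hq
    rcases (TII I M W ∩ projAsg M q).eq_empty_or_nonempty with he | ⟨y, hy⟩
    · simp [he]
    · have hyq := mem_projAsg.mp (Finset.mem_inter.mp hy).2
      have hfq : (projAsg W q).card = I.c q := by
        rcases (card_projAsg_le hW.1 q).lt_or_eq with hlt | h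
        · exact absurd ⟨y, q, (Finset.mem_inter.mp hy).1, hyq,
            (Finset.mem_filter.mp hq).2, hlt⟩ hB1
        · exact h
      exact Lq2 hM hW hfq

end RuralHospitals3

end SPAST

namespace SPAST

section RuralHospitals4
set_option linter.unusedSectionVars false
set_option linter.unusedVariables false

variable {S P L : Type} [Fintype S] [Fintype P] [Fintype L]
  [DecidableEq S] [DecidableEq P] [DecidableEq L]
variable {I : SPAST S P L} {M W : Finset (S × P)}

theorem sum_eq_of_le_of_sum_le {α : Type} {s : Finset α} {f g : α → ℕ}
    (h : ∀ i ∈ s, f i ≤ g i) (hs : ∑ i ∈ s, g i ≤ ∑ i ∈ s, f i) :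
    ∀ i ∈ s, f i = g i := by
  intro i hi
  by_contra hne
  have hlt : f i < g i := lt_of_le_of_ne (h i hi) hne
  have := Finset.sum_lt_sum h ⟨i, hi, hlt⟩
  omega

theorem TI_sumW (hWf : ∀ s : S, ∀ p q : P, (s, p) ∈ W → (s, q) ∈ W → p = q) :
    ∑ lam : L, (TI I M W ∩ lecAsg I W lam).card = (TI I M W).card := by
  have hU : TI I M W = Finset.univ.biUnion (fun lam => TI I M W ∩ lecAsg I W lam) := by
    ext x
    simp only [Finset.mem_biUnion, Finset.mem_univ, true_and, Finset.mem_inter]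
    constructor
    · intro hx
      obtain ⟨-, p, hp, -, -⟩ := Finset.mem_filter.mp hx
      exact ⟨I.lec p, hx, mem_lecAsg.mpr ⟨p, hp, rfl⟩⟩
    · rintro ⟨lam, hx, -⟩
      exact hx
  rw [← Finset.card_biUnion, ← hU]
  intro lam _ lam' _ hne
  rw [Function.onFun, Finset.disjoint_left]
  intro x hx hx'
  obtain ⟨q, hq, hql⟩ := mem_lecAsg.mp (Finset.mem_inter.mp hx).2
  obtain ⟨q', hq', hql'⟩ := mem_lecAsg.mp (Finset.mem_inter.mp hx').2
  exact hne (by rw [← hql, ← hql', hWf x q q' hq hq'])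

theorem TI_sumM_le (hMf : ∀ s : S, ∀ p q : P, (s, p) ∈ M → (s, q) ∈ M → p = q) :
    ∑ lam : L, (TI I M W ∩ lecAsg I M lam).card ≤ (TI I M W).card := by
  have hd : ∀ lam ∈ Finset.univ, ∀ lam' ∈ Finset.univ, lam ≠ lam' →
      Disjoint (TI I M W ∩ lecAsg I M lam) (TI I M W ∩ lecAsg I M lam') := by
    intro lam _ lam' _ hne
    rw [Finset.disjoint_left]
    intro x hx hx'
    obtain ⟨q, hq, hql⟩ := mem_lecAsg.mp (Finset.mem_inter.mp hx).2
    obtain ⟨q', hq', hql'⟩ := mem_lecAsg.mp (Finset.mem_inter.mp hx').2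
    exact hne (by rw [← hql, ← hql', hMf x q q' hq hq'])
  calc ∑ lam : L, (TI I M W ∩ lecAsg I M lam).card
      = (Finset.univ.biUnion (fun lam => TI I M W ∩ lecAsg I M lam)).card :=
        (Finset.card_biUnion hd).symm
    _ ≤ (TI I M W).card := by
        apply Finset.card_le_card
        intro x hx
        obtain ⟨lam, -, hx'⟩ := Finset.mem_biUnion.mp hx
        exact (Finset.mem_inter.mp hx').1

theorem TII_sumM (hMf : ∀ s : S, ∀ p q : P, (s, p) ∈ M → (s, q) ∈ M → p = q) :
    ∑ lam : L, (TII I M W ∩ lecAsg I M lam).card = (TII I M W).card := by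
  have hU : TII I M W = Finset.univ.biUnion (fun lam => TII I M W ∩ lecAsg I M lam) := by
    ext y
    simp only [Finset.mem_biUnion, Finset.mem_univ, true_and, Finset.mem_inter]
    constructor
    · intro hy
      obtain ⟨-, q, hq, -, -⟩ := Finset.mem_filter.mp hy
      exact ⟨I.lec q, hy, mem_lecAsg.mpr ⟨q, hq, rfl⟩⟩
    · rintro ⟨lam, hy, -⟩
      exact hy
  rw [← Finset.card_biUnion, ← hU]
  intro lam _ lam' _ hne
  rw [Function.onFun, Finset.disjoint_left]
  intro x hx hx'
  obtain ⟨q, hq, hql⟩ := mem_lecAsg.mp (Finset.mem_inter.mp hx).2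
  obtain ⟨q', hq', hql'⟩ := mem_lecAsg.mp (Finset.mem_inter.mp hx').2
  exact hne (by rw [← hql, ← hql', hMf x q q' hq hq'])

theorem TII_sumW_le (hWf : ∀ s : S, ∀ p q : P, (s, p) ∈ W → (s, q) ∈ W → p = q) :
    ∑ lam : L, (TII I M W ∩ lecAsg I W lam).card ≤ (TII I M W).card := by
  have hd : ∀ lam ∈ Finset.univ, ∀ lam' ∈ Finset.univ, lam ≠ lam' →
      Disjoint (TII I M W ∩ lecAsg I W lam) (TII I M W ∩ lecAsg I W lam') := by
    intro lam _ lam' _ hne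
    rw [Finset.disjoint_left]
    intro x hx hx'
    obtain ⟨q, hq, hql⟩ := mem_lecAsg.mp (Finset.mem_inter.mp hx).2
    obtain ⟨q', hq', hql'⟩ := mem_lecAsg.mp (Finset.mem_inter.mp hx').2
    exact hne (by rw [← hql, ← hql', hWf x q q' hq hq'])
  calc ∑ lam : L, (TII I M W ∩ lecAsg I W lam).card
      = (Finset.univ.biUnion (fun lam => TII I M W ∩ lecAsg I W lam)).card :=
        (Finset.card_biUnion hd).symm
    _ ≤ (TII I M W).card := by
        apply Finset.card_le_card
        intro x hx
        obtain ⟨lam, -, hx'⟩ := Finset.mem_biUnion.mp hx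
        exact (Finset.mem_inter.mp hx').1

theorem WI_MI_eq (hM : SuperStable I M) (hW : WeaklyStable I W) (lam : L) :
    (TI I M W ∩ lecAsg I W lam).card = (TI I M W ∩ lecAsg I M lam).card := by
  have hle : ∀ l ∈ Finset.univ, (TI I M W ∩ lecAsg I W l).card
      ≤ (TI I M W ∩ lecAsg I M l).card := fun l _ => Llam1 hM hW l
  have hsum : ∑ l : L, (TI I M W ∩ lecAsg I M l).card
      ≤ ∑ l : L, (TI I M W ∩ lecAsg I W l).card := by
    rw [TI_sumW hW.1.2.1]
    exact TI_sumM_le hM.1.2.1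
  exact sum_eq_of_le_of_sum_le hle hsum lam (Finset.mem_univ lam)

theorem MII_WII_eq (hM : SuperStable I M) (hW : WeaklyStable I W) (lam : L) :
    (TII I M W ∩ lecAsg I M lam).card = (TII I M W ∩ lecAsg I W lam).card := by
  have hle : ∀ l ∈ Finset.univ, (TII I M W ∩ lecAsg I M l).card
      ≤ (TII I M W ∩ lecAsg I W l).card := fun l _ => Llam2 hM hW l
  have hsum : ∑ l : L, (TII I M W ∩ lecAsg I W l).card
      ≤ ∑ l : L, (TII I M W ∩ lecAsg I M l).card := by
    rw [TII_sumM hM.1.2.1]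
    exact TII_sumW_le hW.1.2.1
  exact sum_eq_of_le_of_sum_le hle hsum lam (Finset.mem_univ lam)

/-- Every lecturer has the same number of assignees in the weakly stable matching `W`
as in the super-stable matching `M`. -/
theorem lec_eq (hM : SuperStable I M) (hW : WeaklyStable I W) (lam : L) :
    (lecAsg I W lam).card = (lecAsg I M lam).card := by
  have pw := partW hM.1 hW.1 (Finset.univ.filter (fun q => I.lec q = lam))
  have pm := partM hM.1 hW.1 (Finset.univ.filter (fun q => I.lec q = lam))
  rw [asg_lec, asg_lec] at pw pm
  have h1 := WI_MI_eq hM hW lam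
  have h2 := MII_WII_eq hM hW lam
  omega

/-- If lecturer `k` is undersubscribed in both matchings, then every project of `k`
has the same number of assignees in `W` as in `M`. -/
theorem proj_eq (hM : SuperStable I M) (hW : WeaklyStable I W) {k : L}
    (hkM : (lecAsg I M k).card < I.d k) (hkW : (lecAsg I W k).card < I.d k)
    {p : P} (hp : I.lec p = k) :
    (projAsg W p).card = (projAsg M p).card := by
  have hpQ : p ∈ Finset.univ.filter (fun q => I.lec q = k) :=
    Finset.mem_filter.mpr ⟨Finset.mem_univ p, hp⟩
  have hWI : ∀ q ∈ Finset.univ.filter (fun q => I.lec q = k),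
      (TI I M W ∩ projAsg W q).card ≤ (TI I M W ∩ projAsg M q).card := by
    intro q hq
    rcases (TI I M W ∩ projAsg W q).eq_empty_or_nonempty with he | ⟨x, hx⟩
    · simp [he]
    · have hxq := mem_projAsg.mp (Finset.mem_inter.mp hx).2
      have hfq : (projAsg M q).card = I.c q := by
        rcases (card_projAsg_le hM.1 q).lt_or_eq with hlt | h
        · exfalso
          have := (super_lec hM hW.1 (Finset.mem_inter.mp hx).1 hxq hlt).1
          rw [(Finset.mem_filter.mp hq).2] at this
          omega
        · exact h
      exact Lq1 hM hW hfq
  have hMII : ∀ q ∈ Finset.univ.filter (fun q => I.lec q = k),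
      (TII I M W ∩ projAsg M q).card ≤ (TII I M W ∩ projAsg W q).card := by
    intro q hq
    rcases (TII I M W ∩ projAsg M q).eq_empty_or_nonempty with he | ⟨y, hy⟩
    · simp [he]
    · have hyq := mem_projAsg.mp (Finset.mem_inter.mp hy).2
      have hfq : (projAsg W q).card = I.c q := by
        rcases (card_projAsg_le hW.1 q).lt_or_eq with hlt | h
        · exfalso
          have := (weak_lec hW hM.1 (Finset.mem_inter.mp hy).1 hyq hlt).1
          rw [(Finset.mem_filter.mp hq).2] at this
          omega
        · exact h
      exact Lq2 hM hW hfq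
  have e1 := WI_MI_eq hM hW k
  rw [inter_lec_sum hW.1.2.1, inter_lec_sum hM.1.2.1] at e1
  have e2 := MII_WII_eq hM hW k
  rw [inter_lec_sum hM.1.2.1, inter_lec_sum hW.1.2.1] at e2
  have hWIp := sum_eq_of_le_of_sum_le hWI (le_of_eq e1.symm) p hpQ
  have hMIIp := sum_eq_of_le_of_sum_le hMII (le_of_eq e2.symm) p hpQ
  have pw := partW hM.1 hW.1 {p}
  have pm := partM hM.1 hW.1 {p}
  rw [asg_singleton, asg_singleton] at pw pm
  omega

end RuralHospitals4

end SPAST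

open SPAST in
theorem weakly_stable_project_counts_eq_of_super_stable_exists {S P L : Type} [Fintype S] [Fintype P] [Fintype L]
    [DecidableEq S] [DecidableEq P] [DecidableEq L]
    (I : SPAST S P L) (hss : ∃ M : Finset (S × P), SuperStable I M)
    (M1 M2 : Finset (S × P)) (h1 : WeaklyStable I M1) (h2 : WeaklyStable I M2)
    (k : L) (hk : (lecAsg I M1 k).card < I.d k) (p : P) (hp : I.lec p = k) :
    (projAsg M1 p).card = (projAsg M2 p).card := by
  obtain ⟨M0, hM0⟩ := hss
  have e1 := lec_eq hM0 h1
  have e2 := lec_eq hM0 h2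
  have hk0 : (lecAsg I M0 k).card < I.d k := by rw [← e1 k]; exact hk
  have hk2 : (lecAsg I M2 k).card < I.d k := by rw [e2 k]; exact hk0
  have r1 := proj_eq hM0 h1 hk0 hk hp
  have r2 := proj_eq hM0 h2 hk0 hk2 hp
  rw [r1, r2]
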